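/- arXiv:1610.10044 — 2 statements merged into one kernel-verified Lean document; each statement's English description precedes it below -/
import Mathlib

section
/- Let E be the category with two objects a, b and exactly two non-identity morphisms, both from a to b (the walking parallel pair), and let D be the free category on the graph with vertices (0,0), (0,1), (1,0), (1,1) and edges (0,0)→(0,1), (0,1)→(1,1), (0,0)→(1,0), (1,0)→(1,1). Consider the functors: E → D sending the two parallel morphisms to the two length-two composites (0,0)→(0,1)→(1,1) and (0,0)→(1,0)→(1,1) respectively; E → [1] sending both parallel morphisms to the unique non-identity morphism of [1]; D → [1]×[1] the evident functor sending each generating edge to the corresponding morphism of the product category; and [1] → [1]×[1] the diagonal. Then the resulting commutative square is a pushout square in the category Cat of small categories and functors. -/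
open CategoryTheory CategoryTheory.Limits

/-- The vertices of the square graph. -/
inductive SqV : Type
  | v00 | v01 | v10 | v11
  deriving DecidableEq

/-- The four edges of the square graph:
`(0,0) ⟶ (0,1)`, `(0,1) ⟶ (1,1)`, `(0,0) ⟶ (1,0)`, `(1,0) ⟶ (1,1)`. -/
inductive SqE : SqV → SqV → Type
  | a : SqE SqV.v00 SqV.v01
  | b : SqE SqV.v01 SqV.v11
  | c : SqE SqV.v00 SqV.v10
  | d : SqE SqV.v10 SqV.v11

instance : Quiver SqV := ⟨SqE⟩

/-- `D`: the free category on the square graph. -/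
abbrev SqFree := CategoryTheory.Paths SqV

/-- The functor `E ⥤ D` from the walking parallel pair to the free category on the
square graph, sending the two parallel arrows to the two length-two composites
`(0,0) ⟶ (0,1) ⟶ (1,1)` and `(0,0) ⟶ (1,0) ⟶ (1,1)`. -/
def pairToSq : WalkingParallelPair ⥤ SqFree :=
  parallelPair
    ((Quiver.Hom.toPath SqE.a :
        (Paths.of SqV).obj SqV.v00 ⟶ (Paths.of SqV).obj SqV.v01) ≫ Quiver.Hom.toPath SqE.b)
    ((Quiver.Hom.toPath SqE.c :
        (Paths.of SqV).obj SqV.v00 ⟶ (Paths.of SqV).obj SqV.v10) ≫ Quiver.Hom.toPath SqE.d)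

/-- The functor `E ⥤ [1]` sending both parallel arrows to the non-identity arrow. -/
def pairToOne : WalkingParallelPair ⥤ Fin 2 :=
  parallelPair (homOfLE (by decide : (0 : Fin 2) ≤ 1)) (homOfLE (by decide : (0 : Fin 2) ≤ 1))

/-- The evident functor `D ⥤ [1] × [1]` sending each generating edge of the square graph
to the corresponding morphism of the product category. -/
def sqToProd : SqFree ⥤ (Fin 2) × (Fin 2) :=
  Paths.lift
    { obj := fun v => match v with
        | SqV.v00 => (0, 0)
        | SqV.v01 => (0, 1)
        | SqV.v10 => (1, 0)
        | SqV.v11 => (1, 1)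
      map := fun e => match e with
        | SqE.a => (𝟙 _, homOfLE (by decide))
        | SqE.b => (homOfLE (by decide), 𝟙 _)
        | SqE.c => (homOfLE (by decide), 𝟙 _)
        | SqE.d => (𝟙 _, homOfLE (by decide)) }

/-- The diagonal functor `[1] ⥤ [1] × [1]`. -/
def oneToProd : Fin 2 ⥤ (Fin 2) × (Fin 2) := Functor.diag (Fin 2)

variable {C : Type*} [CategoryTheory.Category C]

instance (X Y : Fin 2 × Fin 2) : Subsingleton (X ⟶ Y) :=
  ⟨fun f g => Prod.ext (Subsingleton.elim _ _) (Subsingleton.elim _ _)⟩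

def descFun (F : SqFree ⥤ C)
    (key : F.map ((Quiver.Hom.toPath SqE.a :
            (Paths.of SqV).obj SqV.v00 ⟶ (Paths.of SqV).obj SqV.v01) ≫ Quiver.Hom.toPath SqE.b)
         = F.map ((Quiver.Hom.toPath SqE.c :
            (Paths.of SqV).obj SqV.v00 ⟶ (Paths.of SqV).obj SqV.v10) ≫ Quiver.Hom.toPath SqE.d)) :
    (Fin 2 × Fin 2) ⥤ C where
  obj p := match p with
    | (⟨0, _⟩, ⟨0, _⟩) => F.obj ((Paths.of SqV).obj SqV.v00)
    | (⟨0, _⟩, ⟨1, _⟩) => F.obj ((Paths.of SqV).obj SqV.v01)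
    | (⟨1, _⟩, ⟨0, _⟩) => F.obj ((Paths.of SqV).obj SqV.v10)
    | (⟨1, _⟩, ⟨1, _⟩) => F.obj ((Paths.of SqV).obj SqV.v11)
  map {p q} f := match p, q, f with
    | (⟨0, _⟩, ⟨0, _⟩), (⟨0, _⟩, ⟨0, _⟩), _ => 𝟙 _
    | (⟨0, _⟩, ⟨0, _⟩), (⟨0, _⟩, ⟨1, _⟩), _ => F.map (Quiver.Hom.toPath SqE.a)
    | (⟨0, _⟩, ⟨0, _⟩), (⟨1, _⟩, ⟨0, _⟩), _ => F.map (Quiver.Hom.toPath SqE.c)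
    | (⟨0, _⟩, ⟨0, _⟩), (⟨1, _⟩, ⟨1, _⟩), _ =>
        F.map ((Quiver.Hom.toPath SqE.a :
            (Paths.of SqV).obj SqV.v00 ⟶ (Paths.of SqV).obj SqV.v01) ≫ Quiver.Hom.toPath SqE.b)
    | (⟨0, _⟩, ⟨1, _⟩), (⟨0, _⟩, ⟨0, _⟩), f => (Nat.not_succ_le_zero 0 (leOfHom f.2)).elim
    | (⟨0, _⟩, ⟨1, _⟩), (⟨0, _⟩, ⟨1, _⟩), _ => 𝟙 _
    | (⟨0, _⟩, ⟨1, _⟩), (⟨1, _⟩, ⟨0, _⟩), f => (Nat.not_succ_le_zero 0 (leOfHom f.2)).elim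
    | (⟨0, _⟩, ⟨1, _⟩), (⟨1, _⟩, ⟨1, _⟩), _ => F.map (Quiver.Hom.toPath SqE.b)
    | (⟨1, _⟩, ⟨0, _⟩), (⟨0, _⟩, ⟨0, _⟩), f => (Nat.not_succ_le_zero 0 (leOfHom f.1)).elim
    | (⟨1, _⟩, ⟨0, _⟩), (⟨0, _⟩, ⟨1, _⟩), f => (Nat.not_succ_le_zero 0 (leOfHom f.1)).elim
    | (⟨1, _⟩, ⟨0, _⟩), (⟨1, _⟩, ⟨0, _⟩), _ => 𝟙 _
    | (⟨1, _⟩, ⟨0, _⟩), (⟨1, _⟩, ⟨1, _⟩), _ => F.map (Quiver.Hom.toPath SqE.d)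
    | (⟨1, _⟩, ⟨1, _⟩), (⟨0, _⟩, _), f => (Nat.not_succ_le_zero 0 (leOfHom f.1)).elim
    | (⟨1, _⟩, ⟨1, _⟩), (⟨1, _⟩, ⟨0, _⟩), f => (Nat.not_succ_le_zero 0 (leOfHom f.2)).elim
    | (⟨1, _⟩, ⟨1, _⟩), (⟨1, _⟩, ⟨1, _⟩), _ => 𝟙 _
  map_id p := by
    rcases p with ⟨⟨i, hi⟩, ⟨j, hj⟩⟩
    interval_cases i <;> interval_cases j <;> rfl
  map_comp {p q r} f g := by
    rcases p with ⟨⟨i, hi⟩, ⟨j, hj⟩⟩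
    rcases q with ⟨⟨k, hk⟩, ⟨l, hl⟩⟩
    rcases r with ⟨⟨m, hm⟩, ⟨n, hn⟩⟩
    interval_cases i <;> interval_cases j <;> interval_cases k <;> interval_cases l <;>
      interval_cases m <;> interval_cases n <;>
      first
        | exact (Nat.not_succ_le_zero 0 (leOfHom f.1)).elim
        | exact (Nat.not_succ_le_zero 0 (leOfHom f.2)).elim
        | exact (Nat.not_succ_le_zero 0 (leOfHom g.1)).elim
        | exact (Nat.not_succ_le_zero 0 (leOfHom g.2)).elim
        | rfl
        | exact F.map_comp _ _
        | exact key.trans (F.map_comp _ _)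
        | exact (Category.id_comp _).symm
        | exact (Category.comp_id _).symm

lemma id_case {C D : Type*} [Category C] [Category D] (m K : C ⥤ D) (X : C)
    (h : m.obj X = K.obj X) :
    m.map (𝟙 X) = eqToHom h ≫ K.map (𝟙 X) ≫ eqToHom h.symm := by simp

lemma key_of {C : Type*} [Category C] (F : SqFree ⥤ C) (G : Fin 2 ⥤ C)
    (h : pairToSq ⋙ F = pairToOne ⋙ G) :
    F.map ((Quiver.Hom.toPath SqE.a :
          (Paths.of SqV).obj SqV.v00 ⟶ (Paths.of SqV).obj SqV.v01) ≫ Quiver.Hom.toPath SqE.b)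
    = F.map ((Quiver.Hom.toPath SqE.c :
          (Paths.of SqV).obj SqV.v00 ⟶ (Paths.of SqV).obj SqV.v10) ≫ Quiver.Hom.toPath SqE.d) :=
  (Functor.congr_hom h WalkingParallelPairHom.left).trans
    (Functor.congr_hom h WalkingParallelPairHom.right).symm

/-- The square
```
E ──→ D
│     │
↓     ↓
[1] ─→ [1] × [1]
```
(with `E` the walking parallel pair, `D` the free category on the square graph, and the
four functors as described) is a pushout square in `Cat`. -/
theorem stmt2 :
    IsPushout (Z := Cat.of WalkingParallelPair) (X := Cat.of SqFree)
      (Y := Cat.of (Fin 2)) (P := Cat.of ((Fin 2) × (Fin 2)))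
      pairToSq.toCatHom pairToOne.toCatHom sqToProd.toCatHom oneToProd.toCatHom := by
  have hcomm : pairToSq ⋙ sqToProd = pairToOne ⋙ oneToProd :=
    CategoryTheory.Functor.ext (fun X => by cases X <;> rfl)
      (fun X Y f => Subsingleton.elim _ _)
  apply IsPushout.of_isColimit' ⟨congrArg Functor.toCatHom hcomm⟩
  refine PushoutCocone.IsColimit.mk _ (fun s => (descFun s.inl.toFunctor (key_of s.inl.toFunctor s.inr.toFunctor (congrArg Cat.Hom.toFunctor s.condition))).toCatHom) ?_ ?_ ?_
  · -- fac_left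
    intro s
    apply Cat.ext
    refine @Paths.ext_functor SqV instQuiverSqV _ _ _ _ (funext fun v => by cases v <;> rfl) ?_
    intro x y e
    change SqE x y at e
    cases e <;> exact ((Category.id_comp _).trans (Category.comp_id _)).symm
  · -- fac_right
    intro s
    apply Cat.ext
    refine CategoryTheory.Functor.ext (fun i => ?_) (fun i j f => ?_)
    · rcases i with ⟨i, hi⟩
      interval_cases i
      · exact Functor.congr_obj (congrArg Cat.Hom.toFunctor s.condition) WalkingParallelPair.zero
      · exact Functor.congr_obj (congrArg Cat.Hom.toFunctor s.condition) WalkingParallelPair.one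
    · rcases i with ⟨i, hi⟩; rcases j with ⟨j, hj⟩
      interval_cases i <;> interval_cases j
      · obtain rfl : f = 𝟙 _ := ULift.ext _ _ (Subsingleton.elim _ _)
        erw [CategoryTheory.Functor.map_id, CategoryTheory.Functor.map_id]
        simp
      · exact Functor.congr_hom (congrArg Cat.Hom.toFunctor s.condition) WalkingParallelPairHom.left
      · exact (Nat.not_succ_le_zero 0 (leOfHom f)).elim
      · obtain rfl : f = 𝟙 _ := ULift.ext _ _ (Subsingleton.elim _ _)
        erw [CategoryTheory.Functor.map_id, CategoryTheory.Functor.map_id]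
        simp
  · -- uniq
    intro s m h₁ h₂
    apply Cat.ext
    refine CategoryTheory.Functor.ext (fun p => ?_) (fun p q f => ?_)
    · rcases p with ⟨⟨i, hi⟩, ⟨j, hj⟩⟩
      interval_cases i <;> interval_cases j
      · exact Functor.congr_obj (congrArg Cat.Hom.toFunctor h₁) SqV.v00
      · exact Functor.congr_obj (congrArg Cat.Hom.toFunctor h₁) SqV.v01
      · exact Functor.congr_obj (congrArg Cat.Hom.toFunctor h₁) SqV.v10
      · exact Functor.congr_obj (congrArg Cat.Hom.toFunctor h₁) SqV.v11
    · rcases p with ⟨⟨i, hi⟩, ⟨j, hj⟩⟩; rcases q with ⟨⟨k, hk⟩, ⟨l, hl⟩⟩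
      interval_cases i <;> interval_cases j <;> interval_cases k <;> interval_cases l <;>
        first
          | exact (Nat.not_succ_le_zero 0 (leOfHom f.1)).elim
          | exact (Nat.not_succ_le_zero 0 (leOfHom f.2)).elim
          | exact Functor.congr_hom (congrArg Cat.Hom.toFunctor h₁) (Quiver.Hom.toPath SqE.a)
          | exact Functor.congr_hom (congrArg Cat.Hom.toFunctor h₁) (Quiver.Hom.toPath SqE.b)
          | exact Functor.congr_hom (congrArg Cat.Hom.toFunctor h₁) (Quiver.Hom.toPath SqE.c)
          | exact Functor.congr_hom (congrArg Cat.Hom.toFunctor h₁) (Quiver.Hom.toPath SqE.d)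
          | exact Functor.congr_hom (congrArg Cat.Hom.toFunctor h₁) ((Quiver.Hom.toPath SqE.a :
              (Paths.of SqV).obj SqV.v00 ⟶ (Paths.of SqV).obj SqV.v01) ≫ Quiver.Hom.toPath SqE.b)
          | exact id_case m.toFunctor (descFun s.inl.toFunctor (key_of s.inl.toFunctor s.inr.toFunctor (congrArg Cat.Hom.toFunctor s.condition))) _ _
end

section
/- For any category C, equip the hyperbolic category Hyp(C) := C × Cᵒᵖ with the strict duality sending an object (X, Y) to (Y, X) and a morphism (f, g) to (g, f). Then the strict fixed-point category of the induced involution on the twisted arrow category Tw(Hyp(C)) (sending an object φ to φ^∨ and a morphism (u,v) to (v^∨,u^∨)) is isomorphic to the twisted arrow category Tw(C). -/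
open CategoryTheory Opposite

universe v u

/-- The twisted arrow category of a category `C`: objects are morphisms `f : A ⟶ B` of `C`. -/
structure Tw (C : Type u) [Category.{v} C] where
  left : C
  right : C
  hom : left ⟶ right

/-- A morphism in the twisted arrow category from `f : A ⟶ B` to `g : C' ⟶ D'` is a pair
`(u : A ⟶ C', v : D' ⟶ B)` with `u ≫ g ≫ v = f`. -/
@[ext]
structure TwHom {C : Type u} [Category.{v} C] (f g : Tw C) where
  u : f.left ⟶ g.left
  v : g.right ⟶ f.right
  w : u ≫ g.hom ≫ v = f.hom := by aesop_cat

instance {C : Type u} [Category.{v} C] : Category (Tw C) where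
  Hom := TwHom
  id f := ⟨𝟙 _, 𝟙 _, by simp⟩
  comp {f g h} a b := ⟨a.u ≫ b.u, b.v ≫ a.v, by
    simp only [Category.assoc]
    slice_lhs 2 4 => rw [b.w]
    exact a.w⟩

section
variable {C : Type u} [Category.{v} C]

@[simp] lemma Tw.id_u (f : Tw C) : (𝟙 f : TwHom f f).u = 𝟙 f.left := rfl
@[simp] lemma Tw.id_v (f : Tw C) : (𝟙 f : TwHom f f).v = 𝟙 f.right := rfl
@[simp] lemma Tw.comp_u {f g h : Tw C} (a : f ⟶ g) (b : g ⟶ h) :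
    (a ≫ b).u = a.u ≫ b.u := rfl
@[simp] lemma Tw.comp_v {f g h : Tw C} (a : f ⟶ g) (b : g ⟶ h) :
    (a ≫ b).v = b.v ≫ a.v := rfl

end

/-- The strict involution on the twisted arrow category induced by a (strict) duality
functor `P : Dᵒᵖ ⥤ D`, sending `f : A ⟶ B` to `f^∨ : B^∨ ⟶ A^∨` and `(u, v)` to
`(v^∨, u^∨)`. -/
def twDual {D : Type u} [Category.{v} D] (P : Dᵒᵖ ⥤ D) : Tw D ⥤ Tw D where
  obj f := ⟨P.obj (op f.right), P.obj (op f.left), P.map f.hom.op⟩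
  map {f g} a :=
    { u := P.map a.v.op
      v := P.map a.u.op
      w := by
        simp only [← P.map_comp, ← op_comp, Category.assoc]
        rw [a.w] }

/-- The strict fixed-point category of an endofunctor `T` of `C`: objects are objects `X`
with `T.obj X = X`, morphisms are morphisms `u` with `T.map u = u` (modulo the transport
along the object equalities). -/
def Fixed {C : Type u} [Category.{v} C] (T : C ⥤ C) := {X : C // T.obj X = X}

instance {C : Type u} [Category.{v} C] (T : C ⥤ C) : Category (Fixed T) where
  Hom X Y := {u : X.1 ⟶ Y.1 // T.map u = eqToHom X.2 ≫ u ≫ eqToHom Y.2.symm}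
  id X := ⟨𝟙 _, by simp⟩
  comp {X Y Z} a b := ⟨a.1 ≫ b.1, by simp [a.2, b.2]⟩

variable (C : Type u) [Category.{v} C]

/-- The swap duality on the hyperbolic category `Hyp C = C × Cᵒᵖ`, sending `(X, Y)` to
`(Y, X)` and `(f, g)` to `(g, f)`. -/
def hypSwap : (C × Cᵒᵖ)ᵒᵖ ⥤ C × Cᵒᵖ where
  obj Z := (Z.unop.2.unop, op Z.unop.1)
  map φ := (φ.unop.2.unop, φ.unop.1.op)

section Aux

variable {C : Type u} [Category.{v} C]

@[simp] lemma Tw.eqToHom_u {f g : Tw C} (h : f = g) :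
    (eqToHom h).u = eqToHom (congrArg Tw.left h) := by cases h; rfl

@[simp] lemma Tw.eqToHom_v {f g : Tw C} (h : f = g) :
    (eqToHom h).v = eqToHom (congrArg Tw.right h).symm := by cases h; rfl

@[simp] lemma Fixed.eqToHom_val {T : C ⥤ C} {X Y : Fixed T} (h : X = Y) :
    (eqToHom h).1 = eqToHom (congrArg Subtype.val h) := by cases h; rfl

@[simp] lemma Fixed.id_val {T : C ⥤ C} (X : Fixed T) :
    (𝟙 X : X ⟶ X).1 = 𝟙 X.1 := rfl

@[simp] lemma Fixed.comp_val {T : C ⥤ C} {X Y Z : Fixed T} (a : X ⟶ Y) (b : Y ⟶ Z) :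
    (a ≫ b).1 = a.1 ≫ b.1 := rfl

variable {D : Type u} [Category.{v} D]

@[simp] lemma prod_eqToHom_fst {X Y : C × D} (h : X = Y) :
    (eqToHom h).1 = eqToHom (congrArg Prod.fst h) := by cases h; rfl

@[simp] lemma prod_eqToHom_snd {X Y : C × D} (h : X = Y) :
    (eqToHom h).2 = eqToHom (congrArg Prod.snd h) := by cases h; rfl

end Aux

/-- From fixed points to `Tw C`. -/
def toTw : Fixed (twDual (hypSwap C)) ⥤ Tw C where
  obj f := ⟨f.1.left.1, f.1.right.1, f.1.hom.1⟩
  map {f g} a := ⟨a.1.u.1, a.1.v.1, congrArg Prod.fst a.1.w⟩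
  map_id f := rfl
  map_comp a b := rfl

/-- From `Tw C` to fixed points. -/
def toFix : Tw C ⥤ Fixed (twDual (hypSwap C)) where
  obj t := ⟨⟨(t.left, op t.right), (t.right, op t.left), (t.hom, t.hom.op)⟩, rfl⟩
  map {s t} a := ⟨⟨(a.u, a.v.op), (a.v, a.u.op), by
      refine Prod.ext a.w ?_
      show a.v.op ≫ t.hom.op ≫ a.u.op = s.hom.op
      rw [← op_comp, ← op_comp, Category.assoc, a.w]⟩, by
    show _ = eqToHom rfl ≫ _ ≫ eqToHom rfl
    simp only [eqToHom_refl, Category.comp_id, Category.id_comp]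
    exact (Category.comp_id _).symm⟩
  map_id t := rfl
  map_comp a b := rfl


lemma fixObjEq (f : Fixed (twDual (hypSwap C))) : (toTw C ⋙ toFix C).obj f = f := by
  obtain ⟨⟨⟨A, B⟩, ⟨A', B'⟩, ⟨a, b⟩⟩, hf⟩ := f
  have h1 := congrArg Tw.left hf
  have e2 : op A' = B := congrArg Prod.snd h1
  have e1 : B'.unop = A := congrArg Prod.fst h1
  subst e2; subst e1
  rw [Tw.mk.injEq] at hf
  obtain ⟨-, -, h3⟩ := hf
  have h3' := eq_of_heq h3
  have e3 : b.unop = a := congrArg Prod.fst h3'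
  subst e3
  rfl

lemma fixMapEq {f g : Fixed (twDual (hypSwap C))} (m : f ⟶ g) :
    (toTw C ⋙ toFix C).map m = eqToHom (fixObjEq C f) ≫ m ≫ eqToHom (fixObjEq C g).symm := by
  obtain ⟨⟨⟨A, B⟩, ⟨A', B'⟩, ⟨a, b⟩⟩, hf⟩ := f
  obtain ⟨⟨⟨X, Y⟩, ⟨X', Y'⟩, ⟨x, y⟩⟩, hg⟩ := g
  obtain ⟨⟨⟨u1, u2⟩, ⟨v1, v2⟩, hw⟩, hm⟩ := m
  have h1 := congrArg Tw.left hf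
  have e2 : op A' = B := congrArg Prod.snd h1
  have e1 : B'.unop = A := congrArg Prod.fst h1
  subst e2; subst e1
  rw [Tw.mk.injEq] at hf
  obtain ⟨-, -, h3⟩ := hf
  have e3 : b.unop = a := congrArg Prod.fst (eq_of_heq h3)
  subst e3
  have h1' := congrArg Tw.left hg
  have e2' : op X' = Y := congrArg Prod.snd h1'
  have e1' : Y'.unop = X := congrArg Prod.fst h1'
  subst e2'; subst e1'
  rw [Tw.mk.injEq] at hg
  obtain ⟨-, -, h3'⟩ := hg
  have e3' : y.unop = x := congrArg Prod.fst (eq_of_heq h3')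
  subst e3'
  simp only [eqToHom_refl, Category.comp_id, Category.id_comp] at hm ⊢
  have hu := congrArg TwHom.u hm
  have hv := congrArg TwHom.v hm
  apply Subtype.ext
  refine TwHom.ext ?_ ?_
  · refine Prod.ext ?_ ?_
    · show u1 = _ ≫ u1 ≫ _; erw [Category.id_comp, Category.comp_id]
    · show v1.op = _
      rw [show v1.op = _ from congrArg Prod.snd hu]
      erw [Category.id_comp, Category.comp_id]
      show u2 = _ ≫ u2 ≫ _; erw [Category.id_comp, Category.comp_id]
  · refine Prod.ext ?_ ?_
    · show v1 = (_ ≫ v1) ≫ _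
      erw [Category.id_comp, Category.comp_id]
    · show u1.op = _
      rw [show u1.op = _ from congrArg Prod.snd hv]
      erw [Category.id_comp, Category.comp_id]
      show v2 = (_ ≫ v2) ≫ _; erw [Category.id_comp, Category.comp_id]

/-- For any category `C`, the swap duality on the hyperbolic category
`Hyp C := C × Cᵒᵖ` is a strict duality, and the strict fixed-point category of the induced
involution on the twisted arrow category `Tw (Hyp C)` is isomorphic to the twisted arrow
category `Tw C`. -/

theorem stmt4 :
    (hypSwap C).rightOp ⋙ hypSwap C = 𝟭 (C × Cᵒᵖ) ∧
    ∃ (F : Fixed (twDual (hypSwap C)) ⥤ Tw C) (G : Tw C ⥤ Fixed (twDual (hypSwap C))),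
      F ⋙ G = 𝟭 (Fixed (twDual (hypSwap C))) ∧ G ⋙ F = 𝟭 (Tw C) := by
  constructor
  · rfl
  refine ⟨toTw C, toFix C, ?_, rfl⟩
  exact CategoryTheory.Functor.ext (fixObjEq C) (fun f g m => fixMapEq C m)
end
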